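/- arXiv:2107.11474 — 2 statements merged into one kernel-verified Lean document; each statement's English description precedes it below -/
import Mathlib

section
/- Every exact symmetric unitary t-design requires at least d_Sym² unitaries, where d_Sym = C(d+t−1, t): if ∑_{k=1}^{n} w_k U_k^{⊗t} ρ (U_k†)^{⊗t} = τ_Sym for all density operators ρ on Sym(d^t) with w_k > 0, then n ≥ d_Sym². -/
open Matrix ComplexOrder

/-- The `t`-fold tensor power `U^{⊗t}` of a `d × d` matrix `U`. -/
noncomputable def tpow (d t : ℕ) (U : Matrix (Fin d) (Fin d) ℂ) :
    Matrix (Fin t → Fin d) (Fin t → Fin d) ℂ :=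
  Matrix.of fun x y => ∏ i, U (x i) (y i)

/-- The permutation operator `P(π)` on `(ℂ^d)^{⊗t}`. -/
noncomputable def permMatrix (d t : ℕ) (π : Equiv.Perm (Fin t)) :
    Matrix (Fin t → Fin d) (Fin t → Fin d) ℂ :=
  Matrix.of fun x y => if x = y ∘ ⇑π⁻¹ then 1 else 0

/-- The projector `Π_Sym` onto the symmetric subspace of `(ℂ^d)^{⊗t}`. -/
noncomputable def symProj (d t : ℕ) : Matrix (Fin t → Fin d) (Fin t → Fin d) ℂ :=
  ((Nat.factorial t : ℂ))⁻¹ • ∑ π : Equiv.Perm (Fin t), permMatrix d t π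

variable (d t : ℕ)

lemma permMatrix_mul (π σ : Equiv.Perm (Fin t)) :
    permMatrix d t π * permMatrix d t σ = permMatrix d t (π * σ) := by
  ext x y
  rw [Matrix.mul_apply]
  rw [Finset.sum_eq_single (y ∘ ⇑σ⁻¹)]
  · simp only [permMatrix, Matrix.of_apply, if_pos rfl, mul_one]
    congr 1
    rw [_root_.mul_inv_rev, Equiv.Perm.coe_mul, Function.comp_assoc]
    simp
  · intro z _ hz
    have hz' : z ≠ y ∘ ⇑(Equiv.symm σ) := hz
    simp [permMatrix, hz']
  · simp

lemma permMatrix_conjTranspose (π : Equiv.Perm (Fin t)) :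
    (permMatrix d t π)ᴴ = permMatrix d t π⁻¹ := by
  ext x y
  simp only [permMatrix, conjTranspose_apply, Matrix.of_apply, apply_ite (starRingEnd ℂ),
    _root_.map_one, _root_.map_zero, inv_inv]
  have : (y = x ∘ ⇑π⁻¹) ↔ (x = y ∘ ⇑π) := by
    constructor
    · intro h; subst h; funext i; simp
    · intro h; subst h; funext i; simp
  simp only [this]
  split <;> simp

lemma symProj_conjTranspose : (symProj d t)ᴴ = symProj d t := by
  simp only [symProj, conjTranspose_smul, conjTranspose_sum, permMatrix_conjTranspose]
  rw [show star ((t.factorial : ℂ))⁻¹ = ((t.factorial : ℂ))⁻¹ by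
    rw [star_inv₀]; norm_cast]
  congr 1
  exact Fintype.sum_equiv (Equiv.inv (Equiv.Perm (Fin t)))
    (fun π => permMatrix d t π⁻¹) (fun π => permMatrix d t π) (fun π => rfl)

lemma symProj_mul_permMatrix (σ : Equiv.Perm (Fin t)) :
    symProj d t * permMatrix d t σ = symProj d t := by
  simp only [symProj, Matrix.smul_mul, Finset.sum_mul, permMatrix_mul]
  congr 1
  exact Fintype.sum_equiv (Equiv.mulRight σ)
    (fun π => permMatrix d t (π * σ)) (fun π => permMatrix d t π) (fun π => rfl)

lemma symProj_idem : symProj d t * symProj d t = symProj d t := by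
  nth_rewrite 2 [symProj]
  rw [Matrix.mul_smul, Finset.mul_sum]
  simp only [symProj_mul_permMatrix]
  rw [Finset.sum_const, Finset.card_univ, Fintype.card_perm, Fintype.card_fin,
    ← Nat.cast_smul_eq_nsmul ℂ, smul_smul]
  rw [inv_mul_cancel₀ (by exact_mod_cast t.factorial_ne_zero), one_smul]

lemma tpow_mul (A B : Matrix (Fin d) (Fin d) ℂ) :
    tpow d t A * tpow d t B = tpow d t (A * B) := by
  ext x y
  simp only [tpow, Matrix.mul_apply, Matrix.of_apply]
  rw [Fintype.prod_sum (fun i j => A (x i) j * B j (y i))]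
  exact Finset.sum_congr rfl fun z _ => (Finset.prod_mul_distrib).symm

lemma tpow_conjTranspose (A : Matrix (Fin d) (Fin d) ℂ) :
    tpow d t Aᴴ = (tpow d t A)ᴴ := by
  ext x y
  simp only [tpow, conjTranspose_apply, Matrix.of_apply, star_prod]

lemma tpow_one : tpow d t (1 : Matrix (Fin d) (Fin d) ℂ) = 1 := by
  ext x y
  simp only [tpow, Matrix.of_apply, Matrix.one_apply]
  by_cases h : x = y
  · subst h; simp
  · rw [if_neg h]
    obtain ⟨i, hi⟩ := Function.ne_iff.mp h
    exact Finset.prod_eq_zero (Finset.mem_univ i) (by simp [Matrix.one_apply, hi])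

namespace SDLB

variable {m' : Type*} [Fintype m'] [DecidableEq m']

lemma matrank_add_le (A B : Matrix m' m' ℂ) : (A + B).rank ≤ A.rank + B.rank := by
  rw [Matrix.rank, Matrix.rank, Matrix.rank, mulVecLin_add]
  have hle : LinearMap.range (A.mulVecLin + B.mulVecLin) ≤
      LinearMap.range A.mulVecLin ⊔ LinearMap.range B.mulVecLin := by
    rintro _ ⟨x, rfl⟩
    exact Submodule.add_mem_sup ⟨x, rfl⟩ ⟨x, rfl⟩
  exact le_trans (Submodule.finrank_mono hle)
    (Submodule.finrank_add_le_finrank_add_finrank _ _)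

lemma matrank_sum_le {κ : Type*} (s : Finset κ) (f : κ → Matrix m' m' ℂ)
    (hf : ∀ k, (f k).rank ≤ 1) : (∑ k ∈ s, f k).rank ≤ s.card := by
  classical
  induction s using Finset.induction with
  | empty => simp
  | insert a s h ih =>
    rw [Finset.sum_insert h, Finset.card_insert_of_notMem h]
    calc (f a + ∑ k ∈ s, f k).rank ≤ (f a).rank + (∑ k ∈ s, f k).rank := matrank_add_le _ _
    _ ≤ 1 + s.card := add_le_add (hf a) ih
    _ = s.card + 1 := by omega

lemma matrank_vecMulVec_le (u v : m' → ℂ) : (Matrix.vecMulVec u v).rank ≤ 1 := by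
  rw [Matrix.vecMulVec_eq Unit]
  calc (Matrix.replicateCol Unit u * Matrix.replicateRow Unit v).rank ≤ (Matrix.replicateCol Unit u).rank :=
        Matrix.rank_mul_le_left _ _
  _ ≤ Fintype.card Unit := Matrix.rank_le_card_width _
  _ = 1 := Fintype.card_unit

lemma matrank_eq_trace_of_idem (P : Matrix m' m' ℂ) (h : P * P = P) :
    (P.rank : ℂ) = P.trace := by
  have hproj : LinearMap.IsProj (LinearMap.range P.mulVecLin) P.mulVecLin := by
    constructor
    · intro x; exact ⟨x, rfl⟩
    · rintro _ ⟨x, rfl⟩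
      have := congrArg Matrix.mulVecLin h
      rw [Matrix.mulVecLin_mul] at this
      exact congrFun (congrArg DFunLike.coe this) x
  have htr := hproj.trace
  rw [Matrix.rank]
  rw [← htr]
  rw [LinearMap.trace_eq_matrix_trace ℂ (Pi.basisFun ℂ m')]
  congr 1
  ext i j
  simp [LinearMap.toMatrix_apply, Matrix.mulVec_single]


lemma pol (x1 y1 x2 y2 : ℂ) :
    x1 * y2 = (4:ℂ)⁻¹ * (((x1 + y1) * (x2 + y2) - (x1 - y1) * (x2 - y2)) +
      (Complex.I * ((x1 + Complex.I * y1) * (x2 - Complex.I * y2)) -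
       Complex.I * ((x1 - Complex.I * y1) * (x2 + Complex.I * y2)))) := by
  linear_combination (2⁻¹ * (x1 * y2 - y1 * x2)) * Complex.I_sq

lemma mul_vecMulVec (B : Matrix m' m' ℂ) (u v : m' → ℂ) :
    B * Matrix.vecMulVec u v = Matrix.vecMulVec (B *ᵥ u) v := by
  ext a b
  simp only [Matrix.mul_apply, Matrix.vecMulVec_apply, Matrix.mulVec, dotProduct,
    Finset.sum_mul]
  exact Finset.sum_congr rfl fun z _ => by ring

lemma vecMulVec_mul (B : Matrix m' m' ℂ) (u v : m' → ℂ) :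
    Matrix.vecMulVec u v * B = Matrix.vecMulVec u (v ᵥ* B) := by
  ext a b
  simp only [Matrix.mul_apply, Matrix.vecMulVec_apply, Matrix.vecMul, dotProduct,
    Finset.mul_sum]
  exact Finset.sum_congr rfl fun z _ => by ring

lemma sandwich (X Y : Matrix m' m' ℂ) (u v : m' → ℂ) :
    X * Matrix.vecMulVec u (star v) * Yᴴ = Matrix.vecMulVec (X *ᵥ u) (star (Y *ᵥ v)) := by
  rw [mul_vecMulVec, vecMulVec_mul, Matrix.star_mulVec]

end SDLB


open SDLB

/-- Every exact symmetric unitary `t`-design requires at least `d_Sym²` unitaries, where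
`d_Sym = C(d+t−1, t)`: if `∑_k w_k U_k^{⊗t} ρ (U_k†)^{⊗t} = τ_Sym` for all density
operators `ρ` on `Sym(d^t)`, with all `w_k > 0`, then `n ≥ d_Sym²`. -/
theorem symmetric_design_lower_bound (d t n : ℕ)
    (w : Fin n → ℝ) (hw0 : ∀ k, 0 < w k) (hw1 : ∑ k, w k = 1)
    (U : Fin n → Matrix.unitaryGroup (Fin d) ℂ)
    (hdesign : ∀ ρ : Matrix (Fin t → Fin d) (Fin t → Fin d) ℂ,
      ρ.PosSemidef → ρ.trace = 1 → symProj d t * ρ * symProj d t = ρ →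
      ∑ k, (w k : ℂ) • (tpow d t (U k) * ρ * tpow d t (((U k : Matrix (Fin d) (Fin d) ℂ))ᴴ))
        = ((Nat.choose (d + t - 1) t : ℂ))⁻¹ • symProj d t) :
    (Nat.choose (d + t - 1) t) ^ 2 ≤ n := by
  classical
  set c := Nat.choose (d + t - 1) t with hcdef
  rcases Nat.eq_zero_or_pos c with hc0 | hcpos
  · simp [hc0]
  have hcC : (c : ℂ) ≠ 0 := Nat.cast_ne_zero.mpr hcpos.ne'
  set V := (Fin t → Fin d) with hVdef
  set P : Matrix V V ℂ := symProj d t with hPdef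
  set A : Fin n → Matrix V V ℂ := fun k => tpow d t (U k) with hAdef
  have hPH : Pᴴ = P := symProj_conjTranspose d t
  have hPP : P * P = P := symProj_idem d t
  have hAU : ∀ k, (A k)ᴴ * A k = 1 := by
    intro k
    show (tpow d t (U k))ᴴ * tpow d t (U k) = 1
    rw [← tpow_conjTranspose, tpow_mul]
    have h1 : (U k : Matrix (Fin d) (Fin d) ℂ)ᴴ * (U k : Matrix (Fin d) (Fin d) ℂ) = 1 := by
      have := Unitary.star_mul_self_of_mem (U k).prop
      rwa [Matrix.star_eq_conjTranspose] at this
    rw [h1, tpow_one]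
  have hdes : ∀ ρ, ρ.PosSemidef → ρ.trace = 1 → P * ρ * P = ρ →
      ∑ k, (w k : ℂ) • (A k * ρ * (A k)ᴴ) = (c : ℂ)⁻¹ • P := by
    intro ρ h1 h2 h3
    have := hdesign ρ h1 h2 h3
    simpa only [tpow_conjTranspose] using this
  have stepA : ∀ ψ : V → ℂ, P *ᵥ ψ = ψ →
      ∑ k, (w k : ℂ) • (A k * Matrix.vecMulVec ψ (star ψ) * (A k)ᴴ)
        = (∑ x, ψ x * (starRingEnd ℂ) (ψ x)) • ((c : ℂ)⁻¹ • P) := by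
    intro ψ hψ
    have hher : (Matrix.vecMulVec ψ (star ψ))ᴴ = Matrix.vecMulVec ψ (star ψ) := by
      ext a b
      simp only [Matrix.conjTranspose_apply, Matrix.vecMulVec_apply, Pi.star_apply, star_mul',
        star_star]
      ring
    set r : ℝ := ∑ x, Complex.normSq (ψ x) with hrdef
    have hsum : (∑ x, ψ x * (starRingEnd ℂ) (ψ x)) = (r : ℂ) := by
      rw [hrdef]
      push_cast
      exact Finset.sum_congr rfl fun x _ => (Complex.mul_conj _)
    have hr0 : 0 ≤ r := Finset.sum_nonneg fun x _ => Complex.normSq_nonneg _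
    rcases eq_or_lt_of_le hr0 with h0 | hrpos
    · have hψ0 : ψ = 0 := by
        funext x
        exact Complex.normSq_eq_zero.mp
          ((Finset.sum_eq_zero_iff_of_nonneg (fun x _ => Complex.normSq_nonneg (ψ x))).mp
            h0.symm x (Finset.mem_univ x))
      have hz : Matrix.vecMulVec ψ (star ψ) = 0 := by
        ext a b
        simp [hψ0, Matrix.vecMulVec_apply]
      rw [hz, hψ0]
      simp
    · have hrne : (r : ℂ) ≠ 0 := by exact_mod_cast hrpos.ne'
      set ρ : Matrix V V ℂ := (r : ℂ)⁻¹ • Matrix.vecMulVec ψ (star ψ) with hρdef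
      have hinvr : star ((r : ℂ)⁻¹) = (r : ℂ)⁻¹ := by
        rw [star_inv₀, Complex.star_def, Complex.conj_ofReal]
      have hpsd : ρ.PosSemidef := by
        rw [Matrix.posSemidef_iff_dotProduct_mulVec]
        constructor
        · show ρᴴ = ρ
          rw [hρdef, Matrix.conjTranspose_smul, hher, hinvr]
        · intro x
          have hquad : star x ⬝ᵥ (ρ *ᵥ x)
              = (r : ℂ)⁻¹ * (star (star ψ ⬝ᵥ x) * (star ψ ⬝ᵥ x)) := by
            rw [hρdef, Matrix.smul_mulVec, dotProduct_smul, smul_eq_mul]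
            congr 1
            simp only [dotProduct, Matrix.mulVec, Matrix.vecMulVec_apply, Pi.star_apply,
              star_sum, star_mul', star_star, Finset.mul_sum, Finset.sum_mul]
            rw [Finset.sum_comm]
            refine Finset.sum_congr rfl fun a _ => Finset.sum_congr rfl fun b _ => ?_
            ring
          rw [hquad]
          have h1 : (0 : ℂ) ≤ (r : ℂ)⁻¹ := by
            rw [← Complex.ofReal_inv]
            exact_mod_cast (inv_nonneg.mpr hr0)
          exact mul_nonneg h1 (star_mul_self_nonneg _)
      have htrρ : ρ.trace = 1 := by
        rw [hρdef, Matrix.trace_smul, smul_eq_mul]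
        have : (Matrix.vecMulVec ψ (star ψ)).trace = (r : ℂ) := by
          rw [← hsum, Matrix.trace]
          exact Finset.sum_congr rfl fun x _ => rfl
        rw [this, inv_mul_cancel₀ hrne]
      have hsupp : P * ρ * P = ρ := by
        rw [hρdef, Matrix.mul_smul, Matrix.smul_mul]
        congr 1
        nth_rewrite 2 [← hPH]
        rw [sandwich, hψ]
      have key := hdes ρ hpsd htrρ hsupp
      have key2 : (r : ℂ)⁻¹ • (∑ k, (w k : ℂ) • (A k * Matrix.vecMulVec ψ (star ψ) * (A k)ᴴ))
          = (c : ℂ)⁻¹ • P := by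
        rw [← key, Finset.smul_sum]
        refine Finset.sum_congr rfl fun k _ => ?_
        rw [hρdef, Matrix.mul_smul, Matrix.smul_mul, smul_comm]
      have key3 := congrArg (fun X : Matrix V V ℂ => (r : ℂ) • X) key2
      rw [smul_smul, mul_inv_cancel₀ hrne, one_smul] at key3
      rw [hsum, key3, smul_smul]
  have stepB : ∀ u v : V → ℂ, P *ᵥ u = u → P *ᵥ v = v →
      ∑ k, (w k : ℂ) • (A k * Matrix.vecMulVec u (star v) * (A k)ᴴ)
        = (∑ x, u x * (starRingEnd ℂ) (v x)) • ((c : ℂ)⁻¹ • P) := by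
    intro u v hu hv
    have h1 := stepA (u + v) (by rw [Matrix.mulVec_add, hu, hv])
    have h2 := stepA (u - v) (by rw [Matrix.mulVec_sub, hu, hv])
    have h3 := stepA (u + Complex.I • v)
      (by rw [Matrix.mulVec_add, Matrix.mulVec_smul, hu, hv])
    have h4 := stepA (u - Complex.I • v)
      (by rw [Matrix.mulVec_sub, Matrix.mulVec_smul, hu, hv])
    set s1 : ℂ := ∑ x, (u + v) x * (starRingEnd ℂ) ((u + v) x) with hs1
    set s2 : ℂ := ∑ x, (u - v) x * (starRingEnd ℂ) ((u - v) x) with hs2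
    set s3 : ℂ := ∑ x, (u + Complex.I • v) x * (starRingEnd ℂ) ((u + Complex.I • v) x) with hs3
    set s4 : ℂ := ∑ x, (u - Complex.I • v) x * (starRingEnd ℂ) ((u - Complex.I • v) x) with hs4
    have hM : Matrix.vecMulVec u (star v) = (4 : ℂ)⁻¹ •
        ((Matrix.vecMulVec (u + v) (star (u + v))
          - Matrix.vecMulVec (u - v) (star (u - v)))
        + (Complex.I • Matrix.vecMulVec (u + Complex.I • v) (star (u + Complex.I • v))
          - Complex.I • Matrix.vecMulVec (u - Complex.I • v) (star (u - Complex.I • v)))) := by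
      ext a b
      simp only [Matrix.smul_apply, Matrix.sub_apply, Matrix.add_apply, Matrix.vecMulVec_apply,
        Pi.star_apply, Pi.add_apply, Pi.sub_apply, Pi.smul_apply, smul_eq_mul, star_add,
        star_sub, star_mul', Complex.star_def, map_add, map_sub, Complex.conj_I]
      linear_combination pol (u a) (v a) ((starRingEnd ℂ) (u b)) ((starRingEnd ℂ) (v b))
    have hS : (∑ x, u x * (starRingEnd ℂ) (v x)) =
        (4 : ℂ)⁻¹ * ((s1 - s2) + (Complex.I * s3 - Complex.I * s4)) := by
      rw [hs1, hs2, hs3, hs4]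
      simp only [Finset.mul_sum, ← Finset.sum_sub_distrib, ← Finset.sum_add_distrib]
      refine Finset.sum_congr rfl fun x _ => ?_
      simp only [Pi.add_apply, Pi.sub_apply, Pi.smul_apply, smul_eq_mul, map_add, map_sub,
        _root_.map_mul, Complex.conj_I]
      linear_combination pol (u x) (v x) ((starRingEnd ℂ) (u x)) ((starRingEnd ℂ) (v x))
    rw [hM, hS]
    calc ∑ k, (w k : ℂ) • (A k * ((4 : ℂ)⁻¹ •
        ((Matrix.vecMulVec (u + v) (star (u + v))
          - Matrix.vecMulVec (u - v) (star (u - v)))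
        + (Complex.I • Matrix.vecMulVec (u + Complex.I • v) (star (u + Complex.I • v))
          - Complex.I • Matrix.vecMulVec (u - Complex.I • v)
              (star (u - Complex.I • v))))) * (A k)ᴴ)
        = (4 : ℂ)⁻¹ •
          (((∑ k, (w k : ℂ) • (A k * Matrix.vecMulVec (u + v) (star (u + v)) * (A k)ᴴ))
            - ∑ k, (w k : ℂ) • (A k * Matrix.vecMulVec (u - v) (star (u - v)) * (A k)ᴴ))
          + (Complex.I • ∑ k, (w k : ℂ) •
              (A k * Matrix.vecMulVec (u + Complex.I • v) (star (u + Complex.I • v)) * (A k)ᴴ)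
            - Complex.I • ∑ k, (w k : ℂ) •
              (A k * Matrix.vecMulVec (u - Complex.I • v)
                (star (u - Complex.I • v)) * (A k)ᴴ))) := by
          simp only [Finset.smul_sum, ← Finset.sum_sub_distrib, ← Finset.sum_add_distrib]
          refine Finset.sum_congr rfl fun k _ => ?_
          simp only [Matrix.mul_smul, Matrix.smul_mul, Matrix.mul_sub, Matrix.sub_mul,
            Matrix.mul_add, Matrix.add_mul, smul_sub, smul_add]
          module
    _ = (4 : ℂ)⁻¹ • ((s1 • ((c : ℂ)⁻¹ • P) - s2 • ((c : ℂ)⁻¹ • P))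
          + (Complex.I • (s3 • ((c : ℂ)⁻¹ • P)) - Complex.I • (s4 • ((c : ℂ)⁻¹ • P)))) := by
          rw [h1, h2, h3, h4]
    _ = ((4 : ℂ)⁻¹ * ((s1 - s2) + (Complex.I * s3 - Complex.I * s4))) • ((c : ℂ)⁻¹ • P) := by
          module
  set Q : Matrix (V × V) (V × V) ℂ :=
    Matrix.of (fun p q => P p.1 q.1 * P q.2 p.2) with hQdef
  set B : Matrix (V × V) (V × V) ℂ :=
    ∑ k, Matrix.vecMulVec (fun p : V × V => (w k : ℂ) * (A k * P) p.1 p.2)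
      (star fun q : V × V => (A k * P) q.1 q.2) with hBdef
  have hBQ : B = (c : ℂ)⁻¹ • Q := by
    ext ⟨a, b⟩ ⟨a', b'⟩
    have hcolb : P *ᵥ (P *ᵥ Pi.single b (1 : ℂ)) = P *ᵥ Pi.single b (1 : ℂ) := by
      rw [Matrix.mulVec_mulVec, hPP]
    have hcolb' : P *ᵥ (P *ᵥ Pi.single b' (1 : ℂ)) = P *ᵥ Pi.single b' (1 : ℂ) := by
      rw [Matrix.mulVec_mulVec, hPP]
    have key := stepB (P *ᵥ Pi.single b 1) (P *ᵥ Pi.single b' 1) hcolb hcolb'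
    have hconjP : ∀ x : V, (starRingEnd ℂ) (P x b') = P b' x := by
      intro x
      have h := congrFun (congrFun hPH b') x
      rw [Matrix.conjTranspose_apply] at h
      exact h
    have hscal : (∑ x, (P *ᵥ Pi.single b (1 : ℂ)) x
        * (starRingEnd ℂ) ((P *ᵥ Pi.single b' (1 : ℂ)) x)) = P b' b := by
      simp only [Matrix.mulVec_single_one, Matrix.col_apply]
      calc ∑ x, P x b * (starRingEnd ℂ) (P x b')
          = ∑ x, P b' x * P x b := by
            refine Finset.sum_congr rfl fun x _ => ?_
            rw [hconjP x]; ring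
      _ = (P * P) b' b := (Matrix.mul_apply).symm
      _ = P b' b := by rw [hPP]
    have hlhs : ∀ k, A k * Matrix.vecMulVec (P *ᵥ Pi.single b (1 : ℂ))
          (star (P *ᵥ Pi.single b' (1 : ℂ))) * (A k)ᴴ
        = Matrix.vecMulVec ((A k * P) *ᵥ Pi.single b (1 : ℂ))
          (star ((A k * P) *ᵥ Pi.single b' (1 : ℂ))) := by
      intro k
      rw [sandwich, Matrix.mulVec_mulVec, Matrix.mulVec_mulVec]
    rw [hscal] at key
    simp only [hlhs] at key
    have e := congrFun (congrFun key a) a'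
    simp only [Matrix.sum_apply, Finset.sum_apply, Matrix.smul_apply, Matrix.vecMulVec_apply,
      Pi.star_apply, Matrix.mulVec_single_one, Matrix.col_apply, smul_eq_mul] at e
    show (∑ k, Matrix.vecMulVec (fun p : V × V => (w k : ℂ) * (A k * P) p.1 p.2)
        (star fun q : V × V => (A k * P) q.1 q.2)) (a, b) (a', b')
      = ((c : ℂ)⁻¹ • Q) (a, b) (a', b')
    simp only [Matrix.sum_apply, Matrix.vecMulVec_apply, Pi.star_apply, Matrix.smul_apply,
      Matrix.of_apply, smul_eq_mul]
    calc ∑ k, ((w k : ℂ) * (A k * P) a b) * star ((A k * P) a' b')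
        = ∑ k, (w k : ℂ) * ((A k * P) a b * star ((A k * P) a' b')) :=
          Finset.sum_congr rfl fun k _ => by ring
    _ = P b' b * ((c : ℂ)⁻¹ * P a a') := e
    _ = (c : ℂ)⁻¹ * (P a a' * P b' b) := by ring
  have hQQ : Q * Q = Q := by
    ext ⟨a, b⟩ ⟨a', b'⟩
    rw [Matrix.mul_apply]
    show (∑ z : V × V, (P a z.1 * P z.2 b) * (P z.1 a' * P b' z.2)) = P a a' * P b' b
    rw [Fintype.sum_prod_type]
    calc ∑ z : V, ∑ z' : V, (P a z * P z' b) * (P z a' * P b' z')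
        = (∑ z : V, P a z * P z a') * (∑ z' : V, P b' z' * P z' b) := by
          rw [Finset.sum_mul_sum]
          exact Finset.sum_congr rfl fun z _ => Finset.sum_congr rfl fun z' _ => by ring
    _ = (P * P) a a' * (P * P) b' b := by rw [Matrix.mul_apply, Matrix.mul_apply]
    _ = P a a' * P b' b := by rw [hPP]
  have htrQ : Q.trace = P.trace * P.trace := by
    show (∑ p : V × V, Q p p) = (∑ a : V, P a a) * (∑ b : V, P b b)
    rw [Fintype.sum_prod_type, Finset.sum_mul_sum]
    rfl
  have htrB : B.trace = P.trace := by
    have hterm : ∀ k, (Matrix.vecMulVec (fun p : V × V => (w k : ℂ) * (A k * P) p.1 p.2)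
        (star fun q : V × V => (A k * P) q.1 q.2)).trace = (w k : ℂ) * P.trace := by
      intro k
      have h2 : (A k * P) * (A k * P)ᴴ = A k * P * (A k)ᴴ := by
        rw [Matrix.conjTranspose_mul, hPH, ← Matrix.mul_assoc,
          Matrix.mul_assoc (A k) P P, hPP]
      have h3 : (A k * P * (A k)ᴴ).trace = P.trace := by
        rw [Matrix.trace_mul_cycle (A k) P ((A k)ᴴ), hAU, Matrix.one_mul]
      calc (Matrix.vecMulVec (fun p : V × V => (w k : ℂ) * (A k * P) p.1 p.2)
            (star fun q : V × V => (A k * P) q.1 q.2)).trace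
          = (w k : ℂ) * ∑ p : V × V, (A k * P) p.1 p.2 * star ((A k * P) p.1 p.2) := by
            rw [Finset.mul_sum]
            show (∑ p : V × V, _) = _
            exact Finset.sum_congr rfl fun p _ => by
              show ((w k : ℂ) * (A k * P) p.1 p.2) * star ((A k * P) p.1 p.2) = _
              ring
      _ = (w k : ℂ) * ((A k * P) * (A k * P)ᴴ).trace := by
            congr 1
            rw [Matrix.trace, Fintype.sum_prod_type]
            exact Finset.sum_congr rfl fun a _ => by
              rw [Matrix.diag, Matrix.mul_apply]
              exact Finset.sum_congr rfl fun b _ => by rw [Matrix.conjTranspose_apply]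
      _ = (w k : ℂ) * P.trace := by rw [h2, h3]
    rw [hBdef, Matrix.trace_sum]
    simp only [hterm]
    rw [← Finset.sum_mul]
    have : (∑ k, (w k : ℂ)) = 1 := by
      have := congrArg (fun x : ℝ => (x : ℂ)) hw1
      push_cast at this
      simpa using this
    rw [this, one_mul]
  have hsne : P.trace ≠ 0 := by
    have hV : Nonempty V := by
      rcases Nat.eq_zero_or_pos t with ht | ht
      · exact ⟨fun i => (ht ▸ i).elim0⟩
      · rcases Nat.eq_zero_or_pos d with hd | hd
        · exfalso
          have : c = 0 := by
            rw [hcdef]; exact Nat.choose_eq_zero_of_lt (by omega)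
          omega
        · exact ⟨fun _ => ⟨0, hd⟩⟩
    set N : ℕ := ∑ π : Equiv.Perm (Fin t),
      (Finset.univ.filter (fun x : V => x = x ∘ ⇑π⁻¹)).card with hNdef
    have htrval : P.trace = (t.factorial : ℂ)⁻¹ * (N : ℂ) := by
      rw [hPdef, symProj, Matrix.trace_smul, Matrix.trace_sum, smul_eq_mul]
      congr 1
      rw [hNdef]
      push_cast
      refine Finset.sum_congr rfl fun π _ => ?_
      rw [← Finset.sum_boole]
      rfl
    have hNne : N ≠ 0 := by
      have hle : (Finset.univ.filter (fun x : V => x = x ∘ ⇑((1 : Equiv.Perm (Fin t)))⁻¹)).card ≤ N := by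
        rw [hNdef]
        exact Finset.single_le_sum
          (f := fun π : Equiv.Perm (Fin t) => (Finset.univ.filter (fun x : V => x = x ∘ ⇑π⁻¹)).card)
          (fun π _ => Nat.zero_le _) (Finset.mem_univ 1)
      have : (Finset.univ.filter (fun x : V => x = x ∘ ⇑((1 : Equiv.Perm (Fin t)))⁻¹)) = Finset.univ := by
        refine Finset.filter_true_of_mem fun x _ => ?_
        simp
      rw [this, Finset.card_univ] at hle
      have : 0 < Fintype.card V := Fintype.card_pos
      omega
    rw [htrval]
    exact mul_ne_zero (inv_ne_zero (Nat.cast_ne_zero.mpr t.factorial_ne_zero))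
      (Nat.cast_ne_zero.mpr hNne)
  have htrP : P.trace = (c : ℂ) := by
    have h1 : P.trace = (c : ℂ)⁻¹ * (P.trace * P.trace) := by
      conv_lhs => rw [← htrB, hBQ, Matrix.trace_smul, htrQ, smul_eq_mul]
    have h2 : P.trace * (c : ℂ) = P.trace * P.trace := by
      calc P.trace * (c : ℂ) = ((c : ℂ)⁻¹ * (P.trace * P.trace)) * (c : ℂ) := by rw [← h1]
      _ = P.trace * P.trace := by field_simp
    exact (mul_left_cancel₀ hsne h2).symm
  have hQrank : Q.rank = c ^ 2 := by
    have h1 : (Q.rank : ℂ) = Q.trace := matrank_eq_trace_of_idem Q hQQ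
    rw [htrQ, htrP] at h1
    have : ((c ^ 2 : ℕ) : ℂ) = (c : ℂ) * (c : ℂ) := by push_cast; ring
    exact_mod_cast h1.trans this.symm
  have hrankB : B.rank ≤ n := by
    rw [hBdef]
    calc (∑ k, Matrix.vecMulVec (fun p : V × V => (w k : ℂ) * (A k * P) p.1 p.2)
        (star fun q : V × V => (A k * P) q.1 q.2)).rank ≤ (Finset.univ : Finset (Fin n)).card :=
          matrank_sum_le _ _ (fun k => matrank_vecMulVec_le _ _)
    _ = n := by rw [Finset.card_univ, Fintype.card_fin]
  have hQB : Q.rank ≤ B.rank := by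
    have : Q = ((c : ℂ) • (1 : Matrix (V × V) (V × V) ℂ)) * B := by
      rw [hBQ, Matrix.smul_mul, Matrix.one_mul, smul_smul, mul_inv_cancel₀ hcC, one_smul]
    rw [this]
    exact Matrix.rank_mul_le_right _ _
  calc c ^ 2 = Q.rank := hQrank.symm
  _ ≤ B.rank := hQB
  _ ≤ n := hrankB
end

section
/- Any quantum channel on a D-dimensional system of the form Φ(ρ) = ∑_{k=1}^n w_k V_k ρ V_k† with unitaries V_k and weights w_k > 0 summing to 1, which maps every density operator to the maximally mixed state I/D, must satisfy n ≥ D². -/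
set_option maxHeartbeats 1000000

open Matrix ComplexOrder

private def outerMat {D : ℕ} (a : Fin D → ℂ) : Matrix (Fin D) (Fin D) ℂ :=
  Matrix.vecMulVec a (star a)

private lemma outerMat_apply {D : ℕ} (a : Fin D → ℂ) (i j : Fin D) :
    outerMat a i j = a i * star (a j) := rfl

private lemma outerMat_posSemidef {D : ℕ} (a : Fin D → ℂ) : (outerMat a).PosSemidef := by
  rw [posSemidef_iff_dotProduct_mulVec]
  constructor
  · ext i j
    simp [outerMat, vecMulVec_apply, conjTranspose_apply, mul_comm]
  · intro x
    have key : dotProduct (star x) (outerMat a *ᵥ x)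
        = star (∑ j, star (a j) * x j) * (∑ j, star (a j) * x j) := by
      have hs : star (∑ j, star (a j) * x j) = ∑ i, star (x i) * a i := by
        rw [star_sum]
        exact Finset.sum_congr rfl fun i _ => by
          rw [StarMul.star_mul, star_star]
      rw [hs, Finset.sum_mul_sum]
      simp only [dotProduct, mulVec, outerMat, vecMulVec_apply, Pi.star_apply]
      refine Finset.sum_congr rfl fun i _ => ?_
      simp only [dotProduct, Finset.mul_sum]
      exact Finset.sum_congr rfl fun j _ => by ring
    rw [key]
    exact star_mul_self_nonneg _

private lemma outerMat_trace {D : ℕ} (a : Fin D → ℂ) :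
    (outerMat a).trace = ∑ i, a i * star (a i) := by
  simp [Matrix.trace, Matrix.diag, outerMat, vecMulVec_apply]

private lemma polar_entry {D : ℕ} (j j' i i' : Fin D) (hjj : ¬ j = j') :
    (if i = j then (1:ℂ) else 0) * (if i' = j' then 1 else 0)
      = (2:ℂ)⁻¹ * ( ((if i = j then 1 else 0) + (if i = j' then 1 else 0)) *
                    ((if i' = j then 1 else 0) + (if i' = j' then 1 else 0))
          + Complex.I * (((if i = j then 1 else 0) + Complex.I * (if i = j' then 1 else 0)) *
                    ((if i' = j then 1 else 0) + (-Complex.I) * (if i' = j' then 1 else 0)))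
          - (1 + Complex.I) * ((if i = j then 1 else 0) * (if i' = j then 1 else 0))
          - (1 + Complex.I) * ((if i = j' then 1 else 0) * (if i' = j' then 1 else 0))) := by
  by_cases h1 : i = j <;> by_cases h2 : i = j' <;> by_cases h3 : i' = j <;>
    by_cases h4 : i' = j' <;> simp_all <;> ring_nf

/-- Any mixed-unitary quantum channel `ρ ↦ ∑_k w_k V_k ρ V_k†` on a `D`-dimensional system
(with weights `w_k > 0` summing to `1`) that maps every density operator to the maximally
mixed state `I/D` must use at least `D²` unitaries. -/
theorem mixed_unitary_depolarizing_lower_bound (D n : ℕ)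
    (w : Fin n → ℝ) (hw0 : ∀ k, 0 < w k) (hw1 : ∑ k, w k = 1)
    (V : Fin n → Matrix (Fin D) (Fin D) ℂ)
    (hV : ∀ k, V k ∈ Matrix.unitaryGroup (Fin D) ℂ)
    (h : ∀ ρ : Matrix (Fin D) (Fin D) ℂ, ρ.PosSemidef → ρ.trace = 1 →
      ∑ k, (w k : ℂ) • (V k * ρ * (V k)ᴴ)
        = ((D : ℂ))⁻¹ • (1 : Matrix (Fin D) (Fin D) ℂ)) :
    D ^ 2 ≤ n := by
  set Φ : Matrix (Fin D) (Fin D) ℂ → Matrix (Fin D) (Fin D) ℂ :=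
    fun X => ∑ k, (w k : ℂ) • (V k * X * (V k)ᴴ) with hΦ
  have hΦadd : ∀ X Y, Φ (X + Y) = Φ X + Φ Y := by
    intro X Y
    simp only [hΦ, ← Finset.sum_add_distrib]
    exact Finset.sum_congr rfl fun k _ => by rw [mul_add, add_mul, smul_add]
  have hΦsmul : ∀ (c : ℂ) X, Φ (c • X) = c • Φ X := by
    intro c X
    simp only [hΦ, Finset.smul_sum]
    exact Finset.sum_congr rfl fun k _ => by
      rw [Matrix.mul_smul, Matrix.smul_mul, smul_smul, smul_smul, mul_comm]
  have hΦsub : ∀ X Y, Φ (X - Y) = Φ X - Φ Y := by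
    intro X Y
    simp only [hΦ, ← Finset.sum_sub_distrib]
    exact Finset.sum_congr rfl fun k _ => by rw [mul_sub, sub_mul, smul_sub]
  -- Φ on rank-one outer products
  have houter : ∀ a : Fin D → ℂ,
      Φ (outerMat a) = ((∑ i, a i * star (a i)) * (D : ℂ)⁻¹) • 1 := by
    intro a
    by_cases ha : a = 0
    · subst ha
      have h0 : outerMat (0 : Fin D → ℂ) = 0 := by
        ext i j; rw [outerMat_apply]; simp
      rw [h0]
      simp [hΦ]
    · set r : ℝ := ∑ i, Complex.normSq (a i) with hr
      have hr0 : 0 < r := by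
        obtain ⟨i, hi⟩ := Function.ne_iff.mp ha
        exact Finset.sum_pos' (fun i _ => Complex.normSq_nonneg _)
          ⟨i, Finset.mem_univ i, Complex.normSq_pos.mpr hi⟩
      have htr : (∑ i, a i * star (a i)) = (r : ℂ) := by
        rw [hr]
        push_cast
        exact Finset.sum_congr rfl fun i _ => by
          rw [Complex.star_def, Complex.mul_conj]
      set s : ℝ := Real.sqrt r with hs
      have hs0 : 0 < s := Real.sqrt_pos.mpr hr0
      have hss : (s : ℂ) * (s : ℂ) = (r : ℂ) := by
        rw [← Complex.ofReal_mul, Real.mul_self_sqrt hr0.le]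
      set b : Fin D → ℂ := fun i => (s : ℂ)⁻¹ * a i with hb
      have hab : outerMat a = (r : ℂ) • outerMat b := by
        ext i j
        rw [Matrix.smul_apply, outerMat_apply, outerMat_apply, hb]
        simp only [smul_eq_mul, StarMul.star_mul, Complex.star_def, Complex.conj_ofReal,
          map_inv₀]
        field_simp
        rw [← hss]
        ring
      have hbtr : (outerMat b).trace = 1 := by
        rw [outerMat_trace]
        have : ∀ i, b i * star (b i) = (r : ℂ)⁻¹ * (a i * star (a i)) := by
          intro i
          rw [hb]
          simp only [StarMul.star_mul, Complex.star_def, Complex.conj_ofReal, map_inv₀, ← hss]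
          field_simp
        rw [Finset.sum_congr rfl fun i _ => this i, ← Finset.mul_sum, htr,
          inv_mul_cancel₀ (by exact_mod_cast hr0.ne')]
      have hΦb : Φ (outerMat b) = (D : ℂ)⁻¹ • 1 := by
        rw [hΦ]
        exact h _ (outerMat_posSemidef b) hbtr
      rw [hab, hΦsmul, hΦb, htr, smul_smul]
  -- Φ on standard basis matrices
  have hE : ∀ j j' : Fin D,
      Φ (Matrix.single j j' (1 : ℂ)) = (if j = j' then (D : ℂ)⁻¹ else 0) • 1 := by
    intro j j'
    have hstd : ∀ i i' : Fin D, Matrix.single j j' (1 : ℂ) i i'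
        = (if i = j then 1 else 0) * (if i' = j' then 1 else 0) := by
      intro i i'
      simp only [Matrix.single, Matrix.of_apply]
      split_ifs with h1 h2 h3 h4 h5 h6 h7 <;> simp_all <;> tauto
    set ej : Fin D → ℂ := Pi.single j 1 with hej
    set ej' : Fin D → ℂ := Pi.single j' 1 with hej'
    have hejv : ∀ i, ej i = if i = j then 1 else 0 := fun i => by
      rw [hej]; simp [Pi.single_apply]
    have hejv' : ∀ i, ej' i = if i = j' then 1 else 0 := fun i => by
      rw [hej']; simp [Pi.single_apply]
    have hejs : ∀ i, star (ej i) = if i = j then 1 else 0 := fun i => by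
      rw [hejv i]; split_ifs <;> simp
    have hejs' : ∀ i, star (ej' i) = if i = j' then 1 else 0 := fun i => by
      rw [hejv' i]; split_ifs <;> simp
    have hse : (∑ i, ej i * star (ej i)) = 1 := by
      have : ∀ i : Fin D, ej i * star (ej i) = if i = j then 1 else 0 := fun i => by
        rw [hejv i]; split_ifs <;> simp
      rw [Finset.sum_congr rfl fun i _ => this i, Finset.sum_ite_eq' _ j,
        if_pos (Finset.mem_univ j)]
    have hse' : (∑ i, ej' i * star (ej' i)) = 1 := by
      have : ∀ i : Fin D, ej' i * star (ej' i) = if i = j' then 1 else 0 := fun i => by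
        rw [hejv' i]; split_ifs <;> simp
      rw [Finset.sum_congr rfl fun i _ => this i, Finset.sum_ite_eq' _ j',
        if_pos (Finset.mem_univ j')]
    by_cases hjj : j = j'
    · subst hjj
      have heq : Matrix.single j j (1 : ℂ) = outerMat ej := by
        ext i i'
        rw [outerMat_apply, hstd i i', hejv i, hejs i']
      rw [heq, houter, if_pos rfl, hse, one_mul]
    · set u : Fin D → ℂ := ej + ej' with hu
      set v : Fin D → ℂ := ej + Complex.I • ej' with hv
      have huv : ∀ i, u i = (if i = j then 1 else 0) + (if i = j' then 1 else 0) := fun i => by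
        rw [hu]; simp only [Pi.add_apply, hejv i, hejv' i]
      have hus : ∀ i, star (u i) = (if i = j then 1 else 0) + (if i = j' then 1 else 0) :=
        fun i => by rw [huv i]; split_ifs <;> simp
      have hvv : ∀ i, v i
          = (if i = j then 1 else 0) + Complex.I * (if i = j' then 1 else 0) := fun i => by
        rw [hv]; simp only [Pi.add_apply, Pi.smul_apply, hejv i, hejv' i, smul_eq_mul]
      have hvs : ∀ i, star (v i)
          = (if i = j then 1 else 0) + (-Complex.I) * (if i = j' then 1 else 0) := fun i => by
        rw [hvv i]; split_ifs <;> simp [Complex.conj_I]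
      have hpol : Matrix.single j j' (1 : ℂ)
          = (2 : ℂ)⁻¹ • (outerMat u + Complex.I • outerMat v
              - (1 + Complex.I) • outerMat ej - (1 + Complex.I) • outerMat ej') := by
        ext i i'
        simp only [Matrix.smul_apply, Matrix.sub_apply, Matrix.add_apply, outerMat_apply,
          smul_eq_mul]
        rw [hstd i i', huv i, hus i', hvv i, hvs i', hejv i, hejs i', hejv' i, hejs' i']
        linear_combination polar_entry j j' i i' hjj
      have hsu : (∑ i, u i * star (u i)) = 2 := by
        have : ∀ i : Fin D, u i * star (u i)
            = (if i = j then 1 else 0) + (if i = j' then 1 else 0) := fun i => by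
          rw [huv i]; split_ifs with h1 h2 <;> simp_all
        rw [Finset.sum_congr rfl fun i _ => this i, Finset.sum_add_distrib,
          Finset.sum_ite_eq' _ j, Finset.sum_ite_eq' _ j',
          if_pos (Finset.mem_univ j), if_pos (Finset.mem_univ j')]
        norm_num
      have hsv : (∑ i, v i * star (v i)) = 2 := by
        have : ∀ i : Fin D, v i * star (v i)
            = (if i = j then 1 else 0) + (if i = j' then 1 else 0) := fun i => by
          rw [hvv i]; split_ifs with h1 h2 <;>
            simp_all [Complex.conj_I] <;> ring_nf <;> simp [Complex.I_sq]
        rw [Finset.sum_congr rfl fun i _ => this i, Finset.sum_add_distrib,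
          Finset.sum_ite_eq' _ j, Finset.sum_ite_eq' _ j',
          if_pos (Finset.mem_univ j), if_pos (Finset.mem_univ j')]
        norm_num
      rw [hpol, hΦsmul, hΦsub, hΦsub, hΦadd, hΦsmul, hΦsmul, hΦsmul,
        houter, houter, houter, houter, hsu, hsv, hse, hse', if_neg hjj]
      match_scalars
      ring
  -- entrywise identity
  have hsum : ∀ i i' j j' : Fin D,
      ∑ k, (w k : ℂ) * (V k i j * star (V k i' j'))
        = (if j = j' then (D : ℂ)⁻¹ else 0) * (if i = i' then 1 else 0) := by
    intro i i' j j'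
    have hent : ∀ (A B : Matrix (Fin D) (Fin D) ℂ),
        (A * Matrix.single j j' (1 : ℂ) * B) i i' = A i j * B j' i' := by
      intro A B
      rw [mul_assoc, mul_apply, Finset.sum_eq_single j]
      · rw [Matrix.single_mul_apply_same, one_mul]
      · intro p _ hp
        rw [Matrix.single_mul_apply_of_ne _ _ _ _ _ hp, mul_zero]
      · intro hj; exact absurd (Finset.mem_univ j) hj
    have hc := congrFun (congrFun (hE j j') i) i'
    rw [hΦ] at hc
    simp only [Matrix.sum_apply, Matrix.smul_apply, smul_eq_mul] at hc
    have hlhs : ∀ k, (w k : ℂ) * (V k * Matrix.single j j' (1:ℂ) * (V k)ᴴ) i i'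
        = (w k : ℂ) * (V k i j * star (V k i' j')) := by
      intro k
      rw [hent (V k) ((V k)ᴴ), conjTranspose_apply]
    rw [Finset.sum_congr rfl fun k _ => hlhs k] at hc
    rw [hc, Matrix.one_apply]
  -- rank argument
  rcases Nat.eq_zero_or_pos D with hD | hD
  · simp [hD]
  set M : Matrix (Fin D × Fin D) (Fin n) ℂ :=
    Matrix.of fun p k => (Real.sqrt (w k) : ℂ) * V k p.1 p.2 with hMdef
  have hM : M * Mᴴ = (D : ℂ)⁻¹ • 1 := by
    ext p p'
    obtain ⟨i, j⟩ := p
    obtain ⟨i', j'⟩ := p'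
    rw [mul_apply]
    have hterm : ∀ k, M (i, j) k * (Mᴴ) k (i', j')
        = (w k : ℂ) * (V k i j * star (V k i' j')) := by
      intro k
      rw [conjTranspose_apply, hMdef]
      simp only [Matrix.of_apply]
      rw [StarMul.star_mul, Complex.star_def, Complex.conj_ofReal]
      have hss : ((Real.sqrt (w k) : ℂ)) * (Real.sqrt (w k) : ℂ) = (w k : ℂ) := by
        rw [← Complex.ofReal_mul, Real.mul_self_sqrt (hw0 k).le]
      linear_combination (V k i j * (starRingEnd ℂ) (V k i' j')) * hss
    rw [Finset.sum_congr rfl fun k _ => hterm k, hsum i i' j j',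
      Matrix.smul_apply, Matrix.one_apply, smul_eq_mul]
    by_cases h1 : i = i' <;> by_cases h2 : j = j' <;> simp [h1, h2, Prod.ext_iff]
  have hDne : (D : ℂ) ≠ 0 := Nat.cast_ne_zero.mpr hD.ne'
  have hunit : M * ((D : ℂ) • Mᴴ) = 1 := by
    rw [Matrix.mul_smul, hM, smul_smul, mul_inv_cancel₀ hDne, one_smul]
  calc D ^ 2 = Fintype.card (Fin D × Fin D) := by simp [pow_two]
    _ = (1 : Matrix (Fin D × Fin D) (Fin D × Fin D) ℂ).rank := (Matrix.rank_one).symm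
    _ = (M * ((D : ℂ) • Mᴴ)).rank := by rw [hunit]
    _ ≤ M.rank := Matrix.rank_mul_le_left _ _
    _ ≤ Fintype.card (Fin n) := Matrix.rank_le_card_width M
    _ = n := Fintype.card_fin n
end
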